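/- Let π̃ = Z·π be an unnormalized target, q(x) a proposal density mutually absolutely continuous with π, and for each x let W(x) ≥ 0 be a random variable with E[W(x)] = 1/q(x) and relative variance v(x) = Var(q(x)·W(x)). Then the estimator Ẑ = π̃(x)·W(x) with x ~ q satisfies Var(Ẑ/Z) = χ²(π ‖ q) + E_{x~q}[(π(x)/q(x))² · v(x)]. -/

import Mathlib

open MeasureTheory

/-- Inductive step of RAVI Theorem 3: the relative variance of
`Ẑ = π̃(x)·W(x)`, `x ~ q`, decomposes as `χ²(π‖q)` plus the expected relative
variance `v(x) = Var(q(x)·W(x))` of the meta-inference estimator. -/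
theorem ravi_importance_variance_decomposition
    {X Ω : Type*} [MeasurableSpace X] [MeasurableSpace Ω]
    (μ : Measure X) (P : Measure Ω) [IsProbabilityMeasure P]
    (π q : X → ℝ) (Z : ℝ) (hZ : 0 < Z)
    (hπ_nonneg : ∀ x, 0 ≤ π x) (hπ_norm : ∫ x, π x ∂μ = 1)
    (hq_nonneg : ∀ x, 0 ≤ q x) (hq_norm : ∫ x, q x ∂μ = 1)
    (habs : ∀ x, q x = 0 ↔ π x = 0)
    (W : X → Ω → ℝ) (v : X → ℝ)
    (hW_nonneg : ∀ x ω, 0 ≤ W x ω)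
    (hW_int : ∀ x, Integrable (W x) P)
    (hW_sq_int : ∀ x, Integrable (fun ω => (W x ω) ^ 2) P)
    (hW_mean : ∀ x, q x ≠ 0 → ∫ ω, W x ω ∂P = 1 / q x)
    (hv : ∀ x, v x = (∫ ω, (q x * W x ω) ^ 2 ∂P) - (∫ ω, q x * W x ω ∂P) ^ 2)
    (hint1 : Integrable (fun x => q x * ∫ ω, (π x * W x ω) ^ 2 ∂P) μ)
    (hint2 : Integrable (fun x => q x * ∫ ω, π x * W x ω ∂P) μ)
    (hint3 : Integrable (fun x => q x * (π x / q x) ^ 2) μ)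
    (hint4 : Integrable (fun x => q x * ((π x / q x) ^ 2 * v x)) μ) :
    (∫ x, q x * (∫ ω, (π x * W x ω) ^ 2 ∂P) ∂μ)
        - (∫ x, q x * (∫ ω, π x * W x ω ∂P) ∂μ) ^ 2
      = ((∫ x, q x * (π x / q x) ^ 2 ∂μ) - 1)
        + ∫ x, q x * ((π x / q x) ^ 2 * v x) ∂μ := by
  have h2 : ∀ x, q x * ∫ ω, π x * W x ω ∂P = π x := by
    intro x
    by_cases h : q x = 0
    · simp [h, (habs x).mp h]
    · rw [integral_const_mul, hW_mean x h]
      field_simp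
  have h1 : ∀ x, q x * ∫ ω, (π x * W x ω) ^ 2 ∂P
      = q x * (π x / q x) ^ 2 + q x * ((π x / q x) ^ 2 * v x) := by
    intro x
    by_cases h : q x = 0
    · simp [h]
    · have hWsq : ∫ ω, (π x * W x ω) ^ 2 ∂P
          = (π x) ^ 2 * ∫ ω, (W x ω) ^ 2 ∂P := by
        simp only [mul_pow]; rw [integral_const_mul]
      have hqW2 : ∫ ω, (q x * W x ω) ^ 2 ∂P
          = (q x) ^ 2 * ∫ ω, (W x ω) ^ 2 ∂P := by
        simp only [mul_pow]; rw [integral_const_mul]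
      have hqW : ∫ ω, q x * W x ω ∂P = 1 := by
        rw [integral_const_mul, hW_mean x h]; field_simp
      have hv' := hv x
      rw [hqW2, hqW] at hv'
      rw [hWsq]
      have hI : ∫ ω, (W x ω) ^ 2 ∂P = (v x + 1) / (q x) ^ 2 := by
        field_simp [hv']
        rw [hv']; ring
      rw [hI]
      field_simp
      ring
  have e1 : (∫ x, q x * (∫ ω, (π x * W x ω) ^ 2 ∂P) ∂μ)
      = (∫ x, q x * (π x / q x) ^ 2 ∂μ)
        + ∫ x, q x * ((π x / q x) ^ 2 * v x) ∂μ := by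
    rw [← integral_add hint3 hint4]
    exact integral_congr_ae (Filter.Eventually.of_forall h1)
  have e2 : (∫ x, q x * (∫ ω, π x * W x ω ∂P) ∂μ) = 1 := by
    rw [integral_congr_ae (Filter.Eventually.of_forall h2), hπ_norm]
  rw [e1, e2]
  ring
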